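/- Let A be a closed densely defined operator on a Hilbert space H and B a bounded operator on H such that B A ⊆ A B and B* A ⊆ A B*. Write the polar decomposition A = U |A| with U a partial isometry and |A| = (A*A)^{1/2}. Then B commutes with U and B commutes with (1 + |A|)^{-1}. -/

import Mathlib

open ContinuousLinearMap

noncomputable section

variable {H : Type*} [NormedAddCommGroup H] [InnerProductSpace ℂ H] [CompleteSpace H]

/-- The data of the polar decomposition `A = U ∘ Hm` of a closed densely defined operator `A`:
`Hm = |A| = (A*A)^(1/2)` is a positive self-adjoint operator with the same domain as `A`, `U` is
a partial isometry whose initial space is the closure of the range of `Hm` (so that the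
decomposition is the canonical one), and `R = (1 + |A|)⁻¹` is the bounded resolvent. -/
structure PolarData (A : H →ₗ.[ℂ] H) where
  U : H →L[ℂ] H
  Hm : H →ₗ.[ℂ] H
  R : H →L[ℂ] H
  domain_eq : Hm.domain = A.domain
  factor : ∀ (x : H) (hx : x ∈ Hm.domain) (hx' : x ∈ A.domain),
    A ⟨x, hx'⟩ = U (Hm ⟨x, hx⟩)
  selfAdjoint : Hm.adjoint = Hm
  positive : ∀ (x : H) (hx : x ∈ Hm.domain), 0 ≤ (inner ℂ (Hm ⟨x, hx⟩) x : ℂ).re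
  partialIsometry : U ∘L (adjoint U) ∘L U = U
  resolvent_left : ∀ (x : H) (hx : x ∈ Hm.domain), R (x + Hm ⟨x, hx⟩) = x
  resolvent_right : ∀ y : H, ∃ hy : R y ∈ Hm.domain, R y + Hm ⟨R y, hy⟩ = y
  initial : ∀ (x : H) (hx : x ∈ Hm.domain), (adjoint U) (U (Hm ⟨x, hx⟩)) = Hm ⟨x, hx⟩
  kernel : ∀ y : H,
    (∀ (x : H) (hx : x ∈ Hm.domain), (inner ℂ y (Hm ⟨x, hx⟩) : ℂ) = 0) → U y = 0

open Polynomial in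
lemma commute_aeval {A : Type*} [Ring A] [Algebra ℝ A] {a b : A} (hb : Commute b a)
    (p : ℝ[X]) : Commute b (aeval a p) := by
  induction p using Polynomial.induction_on' with
  | add f g hf hg => rw [map_add]; exact hf.add_right hg
  | monomial n c =>
      rw [aeval_monomial]
      exact (Commute.mul_right (Algebra.commutes c b).symm (hb.pow_right n))

open Polynomial in
lemma commute_cfc {A : Type*} [CStarAlgebra A] {a b : A} (ha : IsSelfAdjoint a)
    (hb : Commute b a) (f : ℝ → ℝ) : Commute b (cfc f a) := by
  by_cases hf : ContinuousOn f (spectrum ℝ a)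
  · rw [cfc_apply (R := ℝ) f a ha hf]
    suffices h : ∀ g : C(spectrum ℝ a, ℝ), Commute b (cfcHom (R := ℝ) ha g) from h _
    intro g
    have hcont := (cfcHom_isClosedEmbedding (R := ℝ) ha).continuous
    have hclosed : IsClosed {g : C(spectrum ℝ a, ℝ) | Commute b (cfcHom (R := ℝ) ha g)} :=
      isClosed_eq (continuous_const.mul hcont) (hcont.mul continuous_const)
    have hpoly : (polynomialFunctions (spectrum ℝ a) : Set C(spectrum ℝ a, ℝ)) ⊆
        {g | Commute b (cfcHom (R := ℝ) ha g)} := by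
      intro g hg
      rw [SetLike.mem_coe, polynomialFunctions, Subalgebra.mem_map] at hg
      obtain ⟨p, -, rfl⟩ := hg
      have h1 : cfcHom (R := ℝ) ha (p.toContinuousMapOnAlgHom _) = cfc (fun x => p.eval x) a := by
        rw [cfc_apply (R := ℝ) (fun x => p.eval x) a ha (by fun_prop)]
        congr 1
      simp only [Set.mem_setOf_eq, h1, cfc_polynomial p a ha]
      exact commute_aeval hb p
    have hg : g ∈ closure (polynomialFunctions (spectrum ℝ a) : Set _) := by
      rw [← Subalgebra.topologicalClosure_coe, polynomialFunctions.topologicalClosure]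
      trivial
    exact closure_minimal hpoly hclosed hg
  · rw [cfc_apply_of_not_continuousOn a hf]; exact Commute.zero_right b

lemma sa_inner {T : H →L[ℂ] H} (h : IsSelfAdjoint T) (u v : H) :
    (inner ℂ (T u) v : ℂ) = inner ℂ u (T v) := by
  rw [← ContinuousLinearMap.adjoint_inner_left, ← ContinuousLinearMap.star_eq_adjoint,
    h.star_eq]

namespace PDAux

/-! ### scalar functions -/

def dd (t : ℝ) : ℝ := 2*t^2 - 2*t + 1

lemma dd_pos (t : ℝ) : 0 < dd t := by unfold dd; nlinarith [sq_nonneg (t - 1), sq_nonneg t]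

def ff₁ (t : ℝ) : ℝ := t / dd t
def ff₂ (t : ℝ) : ℝ := (1 - t) / dd t
def ff (t : ℝ) : ℝ := t * ff₁ t
def gg (s : ℝ) : ℝ := Real.sqrt s / (Real.sqrt s + Real.sqrt (1 - s))

lemma cont_ff₁ : Continuous ff₁ := by
  apply Continuous.div (by fun_prop) (by unfold dd; fun_prop) (fun t => (dd_pos t).ne')

lemma cont_ff₂ : Continuous ff₂ := by
  apply Continuous.div (by fun_prop) (by unfold dd; fun_prop) (fun t => (dd_pos t).ne')

lemma cont_ff : Continuous ff := continuous_id.mul cont_ff₁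

lemma gg_denom_pos (s : ℝ) : 0 < Real.sqrt s + Real.sqrt (1 - s) := by
  rcases lt_or_ge 0 s with hs | hs
  · exact add_pos_of_pos_of_nonneg (Real.sqrt_pos.mpr hs) (Real.sqrt_nonneg _)
  · exact add_pos_of_nonneg_of_pos (Real.sqrt_nonneg _)
      (Real.sqrt_pos.mpr (by linarith))

lemma cont_gg : Continuous gg := by
  apply Continuous.div (by fun_prop) (by fun_prop) (fun s => (gg_denom_pos s).ne')

lemma gg_ff (t : ℝ) (ht : t ∈ Set.Icc (0:ℝ) 1) : gg (ff t) = t := by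
  obtain ⟨ht0, ht1⟩ := ht
  have hd := dd_pos t
  have hs : 0 < Real.sqrt (dd t) := Real.sqrt_pos.mpr hd
  have h1 : ff t = t * t / dd t := by unfold ff ff₁; ring
  have h2 : (1 : ℝ) - ff t = (1-t) * (1-t) / dd t := by
    rw [h1]; field_simp [hd.ne']; unfold dd; ring
  have hsq1 : Real.sqrt (ff t) = t / Real.sqrt (dd t) := by
    rw [h1, Real.sqrt_div (mul_self_nonneg t), Real.sqrt_mul_self ht0]
  have hsq2 : Real.sqrt (1 - ff t) = (1 - t) / Real.sqrt (dd t) := by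
    rw [h2, Real.sqrt_div (mul_self_nonneg (1-t)), Real.sqrt_mul_self (by linarith)]
  unfold gg
  rw [hsq1, hsq2, ← add_div, show t + (1 - t) = (1:ℝ) by ring]
  field_simp



local notation "⟪" x ", " y "⟫" => @inner ℂ _ _ x y

variable {A : H →ₗ.[ℂ] H} (pd : PolarData A)

lemma hm_eq {a b : pd.Hm.domain} (h : (a : H) = b) : pd.Hm a = pd.Hm b := by
  congr 1; exact Subtype.ext h

lemma memD_R (y : H) : pd.R y ∈ pd.Hm.domain := (pd.resolvent_right y).1

lemma hmR_eq (y : H) (h : pd.R y ∈ pd.Hm.domain) :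
    pd.Hm ⟨pd.R y, h⟩ = y - pd.R y := by
  obtain ⟨h', he⟩ := pd.resolvent_right y
  exact eq_sub_of_add_eq' he

lemma hm_symm (hdense : Dense (A.domain : Set H)) (x y : H)
    (hx : x ∈ pd.Hm.domain) (hy : y ∈ pd.Hm.domain) :
    ⟪pd.Hm ⟨x, hx⟩, y⟫ = ⟪x, pd.Hm ⟨y, hy⟩⟫ := by
  have hd : Dense (pd.Hm.domain : Set H) := pd.domain_eq ▸ hdense
  have h := LinearPMap.adjoint_isFormalAdjoint hd
  rw [pd.selfAdjoint] at h
  exact h ⟨x, hx⟩ ⟨y, hy⟩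

lemma R_symm (hdense : Dense (A.domain : Set H)) (u v : H) :
    ⟪pd.R u, v⟫ = ⟪u, pd.R v⟫ := by
  conv_lhs => rw [← (pd.resolvent_right v).2]
  conv_rhs => rw [← (pd.resolvent_right u).2]
  rw [inner_add_right, inner_add_left,
    hm_symm pd hdense _ _ (memD_R pd u) (memD_R pd v)]

lemma R_isSelfAdjoint (hdense : Dense (A.domain : Set H)) : IsSelfAdjoint pd.R := by
  rw [IsSelfAdjoint, star_eq_adjoint]
  exact ((ContinuousLinearMap.eq_adjoint_iff pd.R pd.R).mpr (R_symm pd hdense)).symm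


variable (B : H →L[ℂ] H)

/-- inner product is preserved by `U` on vectors paired with range of `Hm`. -/
lemma U_inner (a z : H) (hz : z ∈ pd.Hm.domain) :
    ⟪a, pd.Hm ⟨z, hz⟩⟫ = ⟪pd.U a, pd.U (pd.Hm ⟨z, hz⟩)⟫ := by
  conv_lhs => rw [← pd.initial z hz]
  rw [ContinuousLinearMap.adjoint_inner_right]

section Bpart

variable (hBA : ∀ (ξ : H) (hξ : ξ ∈ A.domain),
      ∃ h : B ξ ∈ A.domain, B (A ⟨ξ, hξ⟩) = A ⟨B ξ, h⟩)

lemma Bmem (hBA : ∀ (ξ : H) (hξ : ξ ∈ A.domain),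
      ∃ h : B ξ ∈ A.domain, B (A ⟨ξ, hξ⟩) = A ⟨B ξ, h⟩)
    {x : H} (hx : x ∈ pd.Hm.domain) : B x ∈ pd.Hm.domain := by
  rw [pd.domain_eq] at hx ⊢
  exact (hBA x hx).1

lemma star_identity (hdense : Dense (A.domain : Set H))
    (hBA : ∀ (ξ : H) (hξ : ξ ∈ A.domain),
      ∃ h : B ξ ∈ A.domain, B (A ⟨ξ, hξ⟩) = A ⟨B ξ, h⟩)
    (hBstarA : ∀ (ξ : H) (hξ : ξ ∈ A.domain),
      ∃ h : (adjoint B) ξ ∈ A.domain, (adjoint B) (A ⟨ξ, hξ⟩) = A ⟨(adjoint B) ξ, h⟩)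
    (x y : H) (hx : x ∈ pd.Hm.domain) (hy : y ∈ pd.Hm.domain)
    (hBx : B x ∈ pd.Hm.domain) (hB'y : (adjoint B) y ∈ pd.Hm.domain) :
    ⟪pd.Hm ⟨B x, hBx⟩, pd.Hm ⟨y, hy⟩⟫
      = ⟪pd.Hm ⟨x, hx⟩, pd.Hm ⟨(adjoint B) y, hB'y⟩⟫ := by
  have hx' : x ∈ A.domain := pd.domain_eq ▸ hx
  have hy' : y ∈ A.domain := pd.domain_eq ▸ hy
  have hBx' : B x ∈ A.domain := pd.domain_eq ▸ hBx
  have hB'y' : (adjoint B) y ∈ A.domain := pd.domain_eq ▸ hB'y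
  obtain ⟨hm1, he1⟩ := hBA x hx'
  obtain ⟨hm2, he2⟩ := hBstarA y hy'
  calc ⟪pd.Hm ⟨B x, hBx⟩, pd.Hm ⟨y, hy⟩⟫
      = ⟪pd.U (pd.Hm ⟨B x, hBx⟩), pd.U (pd.Hm ⟨y, hy⟩)⟫ := U_inner pd _ y hy
    _ = ⟪A ⟨B x, hBx'⟩, A ⟨y, hy'⟩⟫ := by
        rw [← pd.factor (B x) hBx hBx', ← pd.factor y hy hy']
    _ = ⟪B (A ⟨x, hx'⟩), A ⟨y, hy'⟩⟫ := by
        rw [he1]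
    _ = ⟪A ⟨x, hx'⟩, (adjoint B) (A ⟨y, hy'⟩)⟫ :=
        (ContinuousLinearMap.adjoint_inner_right _ _ _).symm
    _ = ⟪A ⟨x, hx'⟩, A ⟨(adjoint B) y, hB'y'⟩⟫ := by
        rw [he2]
    _ = ⟪pd.U (pd.Hm ⟨x, hx⟩), pd.U (pd.Hm ⟨(adjoint B) y, hB'y⟩)⟫ := by
        rw [pd.factor x hx hx', pd.factor _ hB'y hB'y']
    _ = ⟪pd.Hm ⟨x, hx⟩, pd.Hm ⟨(adjoint B) y, hB'y⟩⟫ := (U_inner pd _ _ hB'y).symm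

end Bpart

lemma R_isPositive (hdense : Dense (A.domain : Set H)) : IsPositive pd.R := by
  refine ⟨isSelfAdjoint_iff_isSymmetric.mp (R_isSelfAdjoint pd hdense), fun y => ?_⟩
  rw [ContinuousLinearMap.reApplyInnerSelf_apply]
  simp only [RCLike.re_to_complex]
  have hy := (pd.resolvent_right y).2
  have hre : (⟪pd.R y, pd.R y + pd.Hm ⟨pd.R y, memD_R pd y⟩⟫).re = (⟪pd.R y, y⟫).re :=
    congrArg (fun t => (⟪pd.R y, t⟫).re) hy
  rw [← hre, inner_add_right, Complex.add_re]
  have h1 : 0 ≤ (⟪pd.R y, pd.R y⟫).re := by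
    simpa only [RCLike.re_to_complex] using inner_self_nonneg (𝕜 := ℂ) (x := pd.R y)
  have h2 : (⟪pd.R y, pd.Hm ⟨pd.R y, memD_R pd y⟩⟫).re
      = (⟪pd.Hm ⟨pd.R y, memD_R pd y⟩, pd.R y⟫).re := by
    simpa only [RCLike.re_to_complex] using
      inner_re_symm (𝕜 := ℂ) (pd.R y) (pd.Hm ⟨pd.R y, memD_R pd y⟩ : H)
  rw [h2]
  have h3 := pd.positive (pd.R y) (memD_R pd y)
  positivity
  
lemma one_sub_R_isPositive (hdense : Dense (A.domain : Set H)) :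
    IsPositive (1 - pd.R) := by
  refine ⟨isSelfAdjoint_iff_isSymmetric.mp ((IsSelfAdjoint.one (R := H →L[ℂ] H)).sub (R_isSelfAdjoint pd hdense)), fun y => ?_⟩
  rw [ContinuousLinearMap.reApplyInnerSelf_apply]
  simp only [RCLike.re_to_complex]
  have h0 : (1 - pd.R) y = pd.Hm ⟨pd.R y, memD_R pd y⟩ := by
    rw [hmR_eq pd y (memD_R pd y)]
    simp [sub_apply]
  rw [h0]
  have hre : (⟪pd.Hm ⟨pd.R y, memD_R pd y⟩, pd.R y + pd.Hm ⟨pd.R y, memD_R pd y⟩⟫).re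
      = (⟪pd.Hm ⟨pd.R y, memD_R pd y⟩, y⟫).re :=
    congrArg (fun t => (⟪pd.Hm ⟨pd.R y, memD_R pd y⟩, t⟫).re) (pd.resolvent_right y).2
  rw [← hre, inner_add_right, Complex.add_re]
  have h1 := pd.positive (pd.R y) (memD_R pd y)
  have h2 : 0 ≤ (⟪pd.Hm ⟨pd.R y, memD_R pd y⟩, pd.Hm ⟨pd.R y, memD_R pd y⟩⟫).re := by
    simpa only [RCLike.re_to_complex] using
      inner_self_nonneg (𝕜 := ℂ) (x := (pd.Hm ⟨pd.R y, memD_R pd y⟩ : H))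
  positivity

lemma spectrum_R_subset (hdense : Dense (A.domain : Set H)) :
    spectrum ℝ pd.R ⊆ Set.Icc 0 1 := by
  intro t ht
  have h0 : (0 : H →L[ℂ] H) ≤ pd.R :=
    (ContinuousLinearMap.nonneg_iff_isPositive _).mpr (R_isPositive pd hdense)
  have h1 : (0 : H →L[ℂ] H) ≤ 1 - pd.R :=
    (ContinuousLinearMap.nonneg_iff_isPositive _).mpr (one_sub_R_isPositive pd hdense)
  refine ⟨spectrum_nonneg_of_nonneg h0 ht, ?_⟩
  have hmem : (1 : ℝ) - t ∈ spectrum ℝ ((1 : H →L[ℂ] H) - pd.R) := by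
    have := spectrum.singleton_sub_eq pd.R (1 : ℝ)
    rw [map_one] at this
    rw [← this]
    exact Set.sub_mem_sub rfl ht
  have := spectrum_nonneg_of_nonneg h1 hmem
  linarith


section CFCpart

variable (hdense : Dense (A.domain : Set H))

lemma R2_eq_mul (hdense : Dense (A.domain : Set H)) :
    cfc ff pd.R = pd.R * cfc ff₁ pd.R := by
  have hsa := R_isSelfAdjoint pd hdense
  have h := cfc_mul (fun t : ℝ => t) ff₁ pd.R continuousOn_id cont_ff₁.continuousOn
  rw [cfc_id' ℝ pd.R hsa] at h
  exact h

lemma R2_prop (hdense : Dense (A.domain : Set H)) (y : H) :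
    ∃ (h1 : cfc ff pd.R y ∈ pd.Hm.domain)
      (h2 : (pd.Hm ⟨cfc ff pd.R y, h1⟩ : H) ∈ pd.Hm.domain),
      cfc ff pd.R y + pd.Hm ⟨(pd.Hm ⟨cfc ff pd.R y, h1⟩ : H), h2⟩ = y := by
  have hsa := R_isSelfAdjoint pd hdense
  have hv : cfc ff pd.R y = pd.R (cfc ff₁ pd.R y) := by
    rw [R2_eq_mul pd hdense]; rfl
  have h1 : cfc ff pd.R y ∈ pd.Hm.domain := hv ▸ memD_R pd _
  -- value of Hm at cfc ff pd.R y
  have he1 : (pd.Hm ⟨cfc ff pd.R y, h1⟩ : H) = pd.R (cfc ff₂ pd.R y) := by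
    have e0 : (pd.Hm ⟨cfc ff pd.R y, h1⟩ : H)
        = pd.Hm ⟨pd.R (cfc ff₁ pd.R y), memD_R pd _⟩ := hm_eq pd hv
    rw [e0, hmR_eq pd _ (memD_R pd _)]
    have e1 : cfc ff₁ pd.R y - pd.R (cfc ff₁ pd.R y) = (cfc ff₁ pd.R - pd.R * cfc ff₁ pd.R) y := by
      simp [ContinuousLinearMap.sub_apply]
    rw [e1, ← R2_eq_mul pd hdense, ← cfc_sub ff₁ ff pd.R cont_ff₁.continuousOn
      cont_ff.continuousOn]
    have e2 : (fun t => ff₁ t - ff t) = fun t => t * ff₂ t := by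
      funext t
      have hne : (2*t^2 - 2*t + 1 : ℝ) ≠ 0 := (dd_pos t).ne'
      unfold ff ff₁ ff₂ dd
      field_simp
    have hmul : cfc (fun t : ℝ => t * ff₂ t) pd.R = pd.R * cfc ff₂ pd.R := by
      have h := cfc_mul (fun t : ℝ => t) ff₂ pd.R continuousOn_id cont_ff₂.continuousOn
      rw [cfc_id' ℝ pd.R hsa] at h
      exact h
    rw [e2, hmul]
    rfl
  have h2 : (pd.Hm ⟨cfc ff pd.R y, h1⟩ : H) ∈ pd.Hm.domain := he1 ▸ memD_R pd _
  refine ⟨h1, h2, ?_⟩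
  have he2 : (pd.Hm ⟨(pd.Hm ⟨cfc ff pd.R y, h1⟩ : H), h2⟩ : H)
      = cfc (fun t => (1 - t) * ff₂ t) pd.R y := by
    have e0 : (pd.Hm ⟨(pd.Hm ⟨cfc ff pd.R y, h1⟩ : H), h2⟩ : H)
        = pd.Hm ⟨pd.R (cfc ff₂ pd.R y), memD_R pd _⟩ := hm_eq pd he1
    rw [e0, hmR_eq pd _ (memD_R pd _)]
    have e1 : cfc ff₂ pd.R y - pd.R (cfc ff₂ pd.R y)
        = ((1 - pd.R) * cfc ff₂ pd.R) y := by
      simp [ContinuousLinearMap.sub_apply, ContinuousLinearMap.mul_apply]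
    rw [e1]
    have e2 : (1 - pd.R) = cfc (fun t : ℝ => 1 - t) pd.R := by
      rw [cfc_sub (fun _ : ℝ => (1:ℝ)) (fun t : ℝ => t) pd.R (continuousOn_const)
        continuousOn_id, cfc_const_one ℝ pd.R hsa, cfc_id' ℝ pd.R hsa]
    rw [e2, ← cfc_mul _ _ pd.R (by fun_prop) cont_ff₂.continuousOn]

  rw [he2]
  have e3 : cfc ff pd.R y + cfc (fun t => (1 - t) * ff₂ t) pd.R y
      = (cfc ff pd.R + cfc (fun t => (1 - t) * ff₂ t) pd.R) y := rfl
  rw [e3, ← cfc_add pd.R ff (fun t => (1 - t) * ff₂ t) cont_ff.continuousOn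
    (((continuous_const.sub continuous_id).mul cont_ff₂).continuousOn)]
  have e4 : (fun t => ff t + (1 - t) * ff₂ t) = fun _ : ℝ => (1:ℝ) := by
    funext t
    have hne : (2*t^2 - 2*t + 1 : ℝ) ≠ 0 := (dd_pos t).ne'
    unfold ff ff₁ ff₂ dd
    rw [mul_div_assoc', mul_div_assoc', ← add_div, div_eq_one_iff_eq hne]
    ring
  rw [e4, cfc_const_one ℝ pd.R hsa]
  simp

end CFCpart


lemma commute_B_R2 (hdense : Dense (A.domain : Set H)) (B : H →L[ℂ] H)
    (hBA : ∀ (ξ : H) (hξ : ξ ∈ A.domain),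
      ∃ h : B ξ ∈ A.domain, B (A ⟨ξ, hξ⟩) = A ⟨B ξ, h⟩)
    (hBstarA : ∀ (ξ : H) (hξ : ξ ∈ A.domain),
      ∃ h : (adjoint B) ξ ∈ A.domain, (adjoint B) (A ⟨ξ, hξ⟩) = A ⟨(adjoint B) ξ, h⟩) :
    Commute B (cfc ff pd.R) := by
  have hsa2 : IsSelfAdjoint (cfc ff pd.R) := cfc_predicate ff pd.R
  show B * cfc ff pd.R = cfc ff pd.R * B
  ext u
  apply ext_inner_right ℂ
  intro v
  show (inner ℂ (B (cfc ff pd.R u)) v : ℂ) = inner ℂ (cfc ff pd.R (B u)) v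
  obtain ⟨h1v, h2v, hsumv⟩ := R2_prop pd hdense v
  obtain ⟨h1u, h2u, hsumu⟩ := R2_prop pd hdense u
  set z := cfc ff pd.R v with hz
  set w := cfc ff pd.R u with hw
  have hBw : B w ∈ pd.Hm.domain := Bmem pd B hBA h1u
  have hB'z : (adjoint B) z ∈ pd.Hm.domain := Bmem pd (adjoint B) hBstarA h1v
  calc (inner ℂ (B w) v : ℂ)
      = inner ℂ (B w) (z + (pd.Hm ⟨(pd.Hm ⟨z, h1v⟩ : H), h2v⟩ : H)) := by rw [hsumv]
    _ = inner ℂ (B w) z + inner ℂ (B w) (pd.Hm ⟨(pd.Hm ⟨z, h1v⟩ : H), h2v⟩ : H) :=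
        inner_add_right _ _ _
    _ = inner ℂ w ((adjoint B) z)
        + inner ℂ (pd.Hm ⟨B w, hBw⟩ : H) (pd.Hm ⟨z, h1v⟩ : H) := by
        rw [ContinuousLinearMap.adjoint_inner_right,
          ← hm_symm pd hdense (B w) _ hBw h2v]
    _ = inner ℂ w ((adjoint B) z)
        + inner ℂ (pd.Hm ⟨w, h1u⟩ : H) (pd.Hm ⟨(adjoint B) z, hB'z⟩ : H) := by
        rw [star_identity pd B hdense hBA hBstarA w z h1u h1v hBw hB'z]
    _ = inner ℂ w ((adjoint B) z)
        + inner ℂ (pd.Hm ⟨(pd.Hm ⟨w, h1u⟩ : H), h2u⟩ : H) ((adjoint B) z) := by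
        rw [hm_symm pd hdense _ ((adjoint B) z) h2u hB'z]
    _ = inner ℂ (w + (pd.Hm ⟨(pd.Hm ⟨w, h1u⟩ : H), h2u⟩ : H)) ((adjoint B) z) :=
        (inner_add_left _ _ _).symm
    _ = inner ℂ u ((adjoint B) z) := by rw [hsumu]
    _ = inner ℂ (B u) z := ContinuousLinearMap.adjoint_inner_right _ _ _
    _ = inner ℂ (cfc ff pd.R (B u)) v := by
        rw [hz, sa_inner hsa2 (B u) v]

lemma commute_B_R (hdense : Dense (A.domain : Set H)) (B : H →L[ℂ] H)
    (hBA : ∀ (ξ : H) (hξ : ξ ∈ A.domain),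
      ∃ h : B ξ ∈ A.domain, B (A ⟨ξ, hξ⟩) = A ⟨B ξ, h⟩)
    (hBstarA : ∀ (ξ : H) (hξ : ξ ∈ A.domain),
      ∃ h : (adjoint B) ξ ∈ A.domain, (adjoint B) (A ⟨ξ, hξ⟩) = A ⟨(adjoint B) ξ, h⟩) :
    Commute B pd.R := by
  have hsa := R_isSelfAdjoint pd hdense
  have hsa2 : IsSelfAdjoint (cfc ff pd.R) := cfc_predicate ff pd.R
  have hcomm2 := commute_B_R2 pd hdense B hBA hBstarA
  have hR_eq : pd.R = cfc gg (cfc ff pd.R) := by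
    rw [← cfc_comp gg ff pd.R hsa (cont_gg.continuousOn) (cont_ff.continuousOn)]
    have : Set.EqOn (gg ∘ ff) (id : ℝ → ℝ) (spectrum ℝ pd.R) := fun t ht =>
      gg_ff t (spectrum_R_subset pd hdense ht)
    rw [cfc_congr this, cfc_id ℝ pd.R hsa]
  rw [hR_eq]
  exact commute_cfc hsa2 hcomm2 gg


lemma strong_comm (B : H →L[ℂ] H) (hc : Commute B pd.R)
    (x : H) (hx : x ∈ pd.Hm.domain) (hBx : B x ∈ pd.Hm.domain) :
    (pd.Hm ⟨B x, hBx⟩ : H) = B (pd.Hm ⟨x, hx⟩) := by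
  set y := x + (pd.Hm ⟨x, hx⟩ : H) with hy
  have hx_eq : pd.R y = x := pd.resolvent_left x hx
  have hBx_eq : B x = pd.R (B y) := by
    rw [← hx_eq]
    calc B (pd.R y) = (B * pd.R) y := rfl
      _ = (pd.R * B) y := by rw [hc.eq]
      _ = pd.R (B y) := rfl
  have h0 : (pd.Hm ⟨B x, hBx⟩ : H) = pd.Hm ⟨pd.R (B y), memD_R pd _⟩ := hm_eq pd hBx_eq
  rw [h0, hmR_eq pd _ (memD_R pd _), ← hBx_eq, ← map_sub]
  congr 1
  rw [hy]
  abel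

end PDAux

open PDAux in
/-- If `A` is a closed densely defined operator and `B` is a bounded operator with
`B A ⊆ A B` and `B* A ⊆ A B*`, then `B` commutes with the partial isometry `U` and with
the bounded operator `(1 + |A|)⁻¹` coming from the polar decomposition `A = U|A|`. -/
theorem statement1 (A : H →ₗ.[ℂ] H)
    (hdense : Dense (A.domain : Set H)) (hclosed : A.IsClosed)
    (B : H →L[ℂ] H)
    (hBA : ∀ (ξ : H) (hξ : ξ ∈ A.domain),
      ∃ h : B ξ ∈ A.domain, B (A ⟨ξ, hξ⟩) = A ⟨B ξ, h⟩)
    (hBstarA : ∀ (ξ : H) (hξ : ξ ∈ A.domain),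
      ∃ h : (adjoint B) ξ ∈ A.domain, (adjoint B) (A ⟨ξ, hξ⟩) = A ⟨(adjoint B) ξ, h⟩)
    (pd : PolarData A) :
    Commute B pd.U ∧ Commute B pd.R := by
  have hRcomm : Commute B pd.R := commute_B_R pd hdense B hBA hBstarA
  refine ⟨?_, hRcomm⟩
  -- adjoint B also commutes with R
  have hRsa := R_isSelfAdjoint pd hdense
  have hstar : Commute (adjoint B) pd.R := by
    have h2 : star pd.R * star B = star B * star pd.R := by
      rw [← star_mul, ← star_mul, hRcomm.eq]
    rw [hRsa.star_eq, ContinuousLinearMap.star_eq_adjoint] at h2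
    exact h2.symm
  -- the closure of the range of Hm
  set M₀ : Submodule ℂ H := LinearMap.range pd.Hm.toFun with hM₀
  set T : H →L[ℂ] H := B ∘L pd.U - pd.U ∘L B with hT
  have hmemHm : ∀ {x : H}, x ∈ pd.Hm.domain → ∀ (hx : x ∈ pd.Hm.domain),
      (pd.Hm ⟨x, hx⟩ : H) ∈ M₀ := by
    intro x _ hx
    exact ⟨⟨x, hx⟩, rfl⟩
  -- T vanishes on the range of Hm
  have hTHm : ∀ (x : H) (hx : x ∈ pd.Hm.domain), T (pd.Hm ⟨x, hx⟩) = 0 := by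
    intro x hx
    have hx' : x ∈ A.domain := pd.domain_eq ▸ hx
    obtain ⟨hBxA, hBAeq⟩ := hBA x hx'
    have hBx : B x ∈ pd.Hm.domain := Bmem pd B hBA hx
    have key : B (pd.U (pd.Hm ⟨x, hx⟩)) = pd.U (B (pd.Hm ⟨x, hx⟩)) := by
      rw [← pd.factor x hx hx', hBAeq, pd.factor (B x) hBx hBxA,
        strong_comm pd B hRcomm x hx hBx]
    simp [hT, ContinuousLinearMap.sub_apply, key]
  have hclosedker : M₀.topologicalClosure ≤ LinearMap.ker T :=
    Submodule.topologicalClosure_minimal M₀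
      (by rintro _ ⟨⟨x, hx⟩, rfl⟩; exact hTHm x hx) (ContinuousLinearMap.isClosed_ker T)
  -- orthogonal part
  have hperpU : ∀ ξ ∈ M₀ᗮ, pd.U ξ = 0 := by
    intro ξ hξ
    apply pd.kernel
    intro x hx
    exact (Submodule.mem_orthogonal' M₀ ξ).mp hξ _ (hmemHm hx hx)
  have hperpB : ∀ ξ ∈ M₀ᗮ, B ξ ∈ M₀ᗮ := by
    intro ξ hξ
    rw [Submodule.mem_orthogonal']
    rintro _ ⟨⟨x, hx⟩, rfl⟩
    show (inner ℂ (B ξ) (pd.Hm ⟨x, hx⟩ : H) : ℂ) = 0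
    have hB'x : (adjoint B) x ∈ pd.Hm.domain := Bmem pd (adjoint B) hBstarA hx
    have h1 : (inner ℂ (B ξ) (pd.Hm ⟨x, hx⟩) : ℂ)
        = inner ℂ ξ ((adjoint B) (pd.Hm ⟨x, hx⟩)) :=
      (ContinuousLinearMap.adjoint_inner_right _ _ _).symm
    rw [h1, ← strong_comm pd (adjoint B) hstar x hx hB'x]
    exact (Submodule.mem_orthogonal' M₀ ξ).mp hξ _ (hmemHm hB'x hB'x)
  -- decomposition
  have hcs : CompleteSpace M₀.topologicalClosure :=
    (Submodule.isClosed_topologicalClosure M₀).completeSpace_coe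
  have hT0 : T = 0 := by
    ext ξ
    obtain ⟨y, hy, z, hz, rfl⟩ :=
      M₀.topologicalClosure.exists_add_mem_mem_orthogonal ξ
    have hz' : z ∈ M₀ᗮ :=
      Submodule.orthogonal_le (Submodule.le_topologicalClosure M₀) hz
    have hy0 : T y = 0 := hclosedker hy
    have hz0 : T z = 0 := by
      simp [hT, ContinuousLinearMap.sub_apply, hperpU z hz', hperpU _ (hperpB z hz')]
    simp [map_add, hy0, hz0]
  have hcomp : B ∘L pd.U = pd.U ∘L B := by rwa [sub_eq_zero] at hT0
  exact hcomp
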